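/- The measure M vanishes for the two-qubit state σ = (1/6)(|00⟩⟨00| + 2|01⟩⟨01| + 3|1+⟩⟨1+|) with |+⟩ = (|0⟩+|1⟩)/√2, even though σ has no product eigenbasis (since |0⟩⟨0| and |+⟩⟨+| are not simultaneously diagonalizable). Hence M does not have a perfect detection range for nonclassically correlated states. -/

import Mathlib

open Matrix Kronecker Finset
open scoped ComplexOrder

attribute [local instance] Classical.propDecidable

noncomputable section

/-- nearest integer multiple of `y` to `x`, ties broken downward; `0` if `y = 0`. -/
def nim (y x : ℝ) : ℝ :=
  if y = 0 then 0
  else if x - y * ⌊x / y⌋ ≤ y * ⌈x / y⌉ - x then y * ⌊x / y⌋ else y * ⌈x / y⌉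

/-- partial trace over the second (B) factor -/
def ptraceB {α β : Type*} [Fintype α] [Fintype β]
    (ρ : Matrix (α × β) (α × β) ℂ) : Matrix α α ℂ :=
  fun a a' => ∑ b : β, ρ (a, b) (a', b)

/-- partial trace over the first (A) factor -/
def ptraceA {α β : Type*} [Fintype α] [Fintype β]
    (ρ : Matrix (α × β) (α × β) ℂ) : Matrix β β ℂ :=
  fun b b' => ∑ a : α, ρ (a, b) (a, b')

/-- the (real) eigenvalues of a Hermitian matrix, junk value `0` otherwise -/
def evalsR {n : Type*} [Fintype n] [DecidableEq n] (A : Matrix n n ℂ) : n → ℝ :=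
  if h : A.IsHermitian then h.eigenvalues else 0

/-- orthogonal projection onto the η-eigenspace of a Hermitian matrix -/
def eigProj {n : Type*} [Fintype n] [DecidableEq n] (ρ : Matrix n n ℂ) (η : ℝ) :
    Matrix n n ℂ :=
  if h : ρ.IsHermitian then
    ∑ k ∈ univ.filter (fun k => h.eigenvalues k = η),
      vecMulVec (fun i => h.eigenvectorBasis k i) (star fun i => h.eigenvectorBasis k i)
  else 0

/-- truncation of ρ down to the η-eigenspace: `η • P_η` -/
def trunc {n : Type*} [Fintype n] [DecidableEq n] (ρ : Matrix n n ℂ) (η : ℝ) :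
    Matrix n n ℂ := (η : ℂ) • eigProj ρ η

/-- dimension of the η-eigenspace -/
def dimEig {n : Type*} [Fintype n] [DecidableEq n] (ρ : Matrix n n ℂ) (η : ℝ) : ℕ :=
  if h : ρ.IsHermitian then (univ.filter (fun k => h.eigenvalues k = η)).card else 0

/-- a single term of the measure `M` -/
def Mterm (η T lam : ℝ) : ℝ := -(|lam - nim η lam| * Real.logb 2 (lam / T))

/-- the measure `M` seen from side A -/
def MmeasA {α β : Type*} [Fintype α] [Fintype β] [DecidableEq α] [DecidableEq β]
    (ρ : Matrix (α × β) (α × β) ℂ) : ℝ :=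
  ∑ η ∈ Finset.image (evalsR ρ) univ, ∑ i : α,
    Mterm η (η * (dimEig ρ η : ℝ)) (evalsR (ptraceB (trunc ρ η)) i)

/-- the measure `M` seen from side B -/
def MmeasB {α β : Type*} [Fintype α] [Fintype β] [DecidableEq α] [DecidableEq β]
    (ρ : Matrix (α × β) (α × β) ℂ) : ℝ :=
  ∑ η ∈ Finset.image (evalsR ρ) univ, ∑ i : β,
    Mterm η (η * (dimEig ρ η : ℝ)) (evalsR (ptraceA (trunc ρ η)) i)

/-- the measure `M` of nonclassical correlation -/
def Mmeas {α β : Type*} [Fintype α] [Fintype β] [DecidableEq α] [DecidableEq β]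
    (ρ : Matrix (α × β) (α × β) ℂ) : ℝ := (MmeasA ρ + MmeasB ρ) / 2

def IsDensityMatrix {n : Type*} [Fintype n] [DecidableEq n] (ρ : Matrix n n ℂ) : Prop :=
  ρ.PosSemidef ∧ ρ.trace = 1

/-- ρ admits an eigenbasis consisting of product vectors -/
def HasProductEigenbasis {α β : Type*} [Fintype α] [Fintype β] [DecidableEq α] [DecidableEq β]
    (ρ : Matrix (α × β) (α × β) ℂ) : Prop :=
  ∃ (a : α → α → ℂ) (b : β → β → ℂ) (e : α → β → ℝ),
    (∀ j j', ∑ i, star (a j i) * a j' i = if j = j' then 1 else 0) ∧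
    (∀ k k', ∑ i, star (b k i) * b k' i = if k = k' then 1 else 0) ∧
    ρ = ∑ j : α, ∑ k : β,
      (e j k : ℂ) • (vecMulVec (a j) (star (a j)) ⊗ₖ vecMulVec (b k) (star (b k)))


def ket00 : Fin 2 × Fin 2 → ℂ := fun p => if p = (0, 0) then 1 else 0
def ket01 : Fin 2 × Fin 2 → ℂ := fun p => if p = (0, 1) then 1 else 0
def ket10 : Fin 2 × Fin 2 → ℂ := fun p => if p = (1, 0) then 1 else 0
/-- `|1+⟩ = |1⟩ ⊗ (|0⟩ + |1⟩)/√2` -/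
def ket1p : Fin 2 × Fin 2 → ℂ := fun p => if p.1 = 1 then ((1 / Real.sqrt 2 : ℝ) : ℂ) else 0
/-- `|φ⟩ = (|00⟩ + |11⟩)/√2` -/
def ketBell : Fin 2 × Fin 2 → ℂ := fun p => if p.1 = p.2 then ((1 / Real.sqrt 2 : ℝ) : ℂ) else 0

/-- `σ = (1/6)(|00⟩⟨00| + 2|01⟩⟨01| + 3|1+⟩⟨1+|)` -/
def sigmaState : Matrix (Fin 2 × Fin 2) (Fin 2 × Fin 2) ℂ :=
  ((1 / 6 : ℝ) : ℂ) • vecMulVec ket00 (star ket00)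
  + ((1 / 3 : ℝ) : ℂ) • vecMulVec ket01 (star ket01)
  + ((1 / 2 : ℝ) : ℂ) • vecMulVec ket1p (star ket1p)

section Dev
variable {n : Type*} [Fintype n] [DecidableEq n]

lemma nim_self (y : ℝ) : nim y y = y := by
  unfold nim
  rcases eq_or_ne y 0 with h | h
  · simp [h]
  · rw [if_neg h, div_self h]
    norm_num

lemma nim_zero' (y : ℝ) : nim y 0 = 0 := by
  unfold nim
  rcases eq_or_ne y 0 with h | h
  · simp [h]
  · rw [if_neg h, zero_div]
    norm_num

lemma Mterm_of_eq (η T lam : ℝ) (h : lam = η ∨ lam = 0) : Mterm η T lam = 0 := by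
  rcases h with rfl | rfl <;> simp [Mterm, nim_self, nim_zero']

lemma det_root_of_eigenvector {A : Matrix n n ℂ} {lam : ℂ} {v : n → ℂ}
    (hv : v ≠ 0) (h : A *ᵥ v = lam • v) : (A - lam • 1).det = 0 := by
  rw [← Matrix.exists_mulVec_eq_zero_iff]
  exact ⟨v, hv, by rw [Matrix.sub_mulVec, Matrix.smul_mulVec, Matrix.one_mulVec, h,
    sub_self]⟩

lemma evalsR_root (A : Matrix n n ℂ) (i : n) :
    evalsR A i = 0 ∨ (A - ((evalsR A i : ℝ) : ℂ) • 1).det = 0 := by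
  unfold evalsR
  split
  · next h =>
    right
    refine det_root_of_eigenvector (v := ⇑(h.eigenvectorBasis i)) ?_ ?_
    · exact (WithLp.ofLp_eq_zero 2).ne.2 <| h.eigenvectorBasis.orthonormal.ne_zero i
    · have := h.mulVec_eigenvectorBasis i
      rw [this]
      ext j
      simp [Complex.real_smul]
  · left; rfl

lemma trace_eq_sum_evals {A : Matrix n n ℂ} (hA : A.IsHermitian) :
    A.trace = ∑ i, (hA.eigenvalues i : ℂ) := by
  conv_lhs => rw [hA.spectral_theorem, Unitary.conjStarAlgAut_apply]
  rw [Matrix.trace_mul_cycle]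
  rw [show (star (hA.eigenvectorUnitary : Matrix n n ℂ)) * (hA.eigenvectorUnitary : Matrix n n ℂ) = 1 from ?_]
  · simp [Matrix.trace_diagonal]
  · exact Matrix.UnitaryGroup.star_mul_self _

lemma trace_sq_eq_sum_evals {A : Matrix n n ℂ} (hA : A.IsHermitian) :
    (A * A).trace = ∑ i, ((hA.eigenvalues i : ℂ)) ^ 2 := by
  conv_lhs => rw [hA.spectral_theorem, Unitary.conjStarAlgAut_apply]
  rw [show ∀ U D : Matrix n n ℂ, (U * D * star U) * (U * D * star U) = U * (D * (star U * U) * D) * star U from fun U D => by noncomm_ring]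
  rw [Matrix.UnitaryGroup.star_mul_self]
  rw [Matrix.trace_mul_cycle, ← Matrix.mul_assoc,
    Matrix.UnitaryGroup.star_mul_self, Matrix.one_mul]
  simp [Matrix.diagonal_mul_diagonal, Matrix.trace_diagonal, sq]

end Dev
section Dev2

lemma inv_sqrt2_sq : (((Real.sqrt 2 : ℝ) : ℂ))⁻¹ * (((Real.sqrt 2 : ℝ) : ℂ))⁻¹ = 1/2 := by
  rw [← mul_inv, ← Complex.ofReal_mul, Real.mul_self_sqrt (le_of_lt two_pos)]
  norm_num

lemma sigma_apply (p q : Fin 2 × Fin 2) :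
    sigmaState p q =
      if p = (0,0) ∧ q = (0,0) then (1/6 : ℂ)
      else if p = (0,1) ∧ q = (0,1) then (1/3 : ℂ)
      else if p.1 = 1 ∧ q.1 = 1 then (1/4 : ℂ) else 0 := by
  rcases p with ⟨p1, p2⟩; rcases q with ⟨q1, q2⟩
  fin_cases p1 <;> fin_cases p2 <;> fin_cases q1 <;> fin_cases q2 <;>
    simp [sigmaState, Matrix.vecMulVec_apply, ket00, ket01, ket1p, Matrix.add_apply,
      Matrix.smul_apply, Prod.ext_iff] <;>
    norm_num [inv_sqrt2_sq]

lemma sigma_herm : sigmaState.IsHermitian := by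
  ext p q
  rw [Matrix.conjTranspose_apply, sigma_apply, sigma_apply]
  rcases p with ⟨p1, p2⟩; rcases q with ⟨q1, q2⟩
  fin_cases p1 <;> fin_cases p2 <;> fin_cases q1 <;> fin_cases q2 <;>
    norm_num [Prod.ext_iff]

lemma sigma_trace : sigmaState.trace = 1 := by
  rw [Matrix.trace]
  rw [Fintype.sum_prod_type]
  simp [Matrix.diag, sigma_apply, Fin.sum_univ_two, Prod.ext_iff]
  norm_num

lemma sigma_trace_sq : (sigmaState * sigmaState).trace = 7/18 := by
  rw [Matrix.trace]
  simp only [Matrix.diag_apply, Matrix.mul_apply, Fintype.sum_prod_type, Fin.sum_univ_two,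
    sigma_apply]
  norm_num [Prod.ext_iff]

lemma det_sigma_sub (z : ℂ) :
    (sigmaState - z • 1).det = z * (z - 1/6) * (z - 1/3) * (z - 1/2) := by
  rw [← Matrix.det_submatrix_equiv_self (finProdFinEquiv (m := 2) (n := 2)).symm]
  simp only [Matrix.det_succ_row_zero, Fin.sum_univ_succ, Matrix.det_fin_two,
    Matrix.submatrix_apply, Matrix.sub_apply, Matrix.smul_apply, Matrix.one_apply,
    sigma_apply, finProdFinEquiv, Equiv.coe_fn_symm_mk]
  simp [Prod.ext_iff, Fin.ext_iff, Fin.coe_divNat, Fin.coe_modNat, Fin.succAbove, Fin.lt_def]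
  ring
end Dev2
section Dev3

lemma ofReal_eq_of_eq {z : ℝ} {q : ℚ} (h : (z : ℂ) = (q : ℂ)) : z = q := by
  exact_mod_cast h

lemma eigen_mem {z : ℝ} (h : (sigmaState - ((z : ℝ) : ℂ) • 1).det = 0) :
    z = 0 ∨ z = 1/6 ∨ z = 1/3 ∨ z = 1/2 := by
  rw [det_sigma_sub] at h
  rcases mul_eq_zero.mp h with h | h
  · rcases mul_eq_zero.mp h with h | h
    · rcases mul_eq_zero.mp h with h | h
      · left; exact_mod_cast h
      · right; left
        have : z = ((1/6 : ℚ) : ℝ) := ofReal_eq_of_eq (by push_cast; linear_combination h)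
        norm_num at this; exact this
    · right; right; left
      have : z = ((1/3 : ℚ) : ℝ) := ofReal_eq_of_eq (by push_cast; linear_combination h)
      norm_num at this; exact this
  · right; right; right
    have : z = ((1/2 : ℚ) : ℝ) := ofReal_eq_of_eq (by push_cast; linear_combination h)
    norm_num at this; exact this

set_option maxHeartbeats 1000000 in
lemma card_filter_bash (f : Fin 2 × Fin 2 → ℝ)
    (hmem : ∀ k, f k = 0 ∨ f k = 1/6 ∨ f k = 1/3 ∨ f k = 1/2)
    (hsum : ∑ k, f k = 1) (hsq : ∑ k, f k ^ 2 = 7/18) (η : ℝ)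
    (hη : η = 1/6 ∨ η = 1/3 ∨ η = 1/2) :
    (univ.filter (fun k => f k = η)).card = 1 := by
  rw [Fintype.sum_prod_type, Fin.sum_univ_two, Fin.sum_univ_two, Fin.sum_univ_two] at hsum hsq
  rw [Finset.card_filter, Fintype.sum_prod_type, Fin.sum_univ_two, Fin.sum_univ_two,
    Fin.sum_univ_two]
  rcases hmem (0,0) with h00|h00|h00|h00 <;>
  rcases hmem (0,1) with h01|h01|h01|h01 <;>
  rcases hmem (1,0) with h10|h10|h10|h10 <;>
  rcases hmem (1,1) with h11|h11|h11|h11 <;>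
    rw [h00, h01, h10, h11] at hsum hsq <;>
    first
      | (exfalso; revert hsum hsq; norm_num; done)
      | (rcases hη with rfl | rfl | rfl <;> norm_num [h00, h01, h10, h11, -Prod.mk_zero_zero, -Prod.mk_one_one])

end Dev3
section Dev4

lemma sigma_evals_mem (k : Fin 2 × Fin 2) :
    sigma_herm.eigenvalues k = 0 ∨ sigma_herm.eigenvalues k = 1/6 ∨
    sigma_herm.eigenvalues k = 1/3 ∨ sigma_herm.eigenvalues k = 1/2 := by
  apply eigen_mem
  apply det_root_of_eigenvector (v := ⇑(sigma_herm.eigenvectorBasis k))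
  · exact (WithLp.ofLp_eq_zero 2).ne.2 <| sigma_herm.eigenvectorBasis.orthonormal.ne_zero k
  · have := sigma_herm.mulVec_eigenvectorBasis k
    rw [this]; ext j; simp [Complex.real_smul]

lemma sigma_evals_sum : ∑ k, sigma_herm.eigenvalues k = 1 := by
  have h := trace_eq_sum_evals sigma_herm
  rw [sigma_trace] at h
  have : ((∑ k, sigma_herm.eigenvalues k : ℝ) : ℂ) = 1 := by push_cast; rw [← h]
  exact_mod_cast this

lemma sigma_evals_sq_sum : ∑ k, (sigma_herm.eigenvalues k) ^ 2 = 7/18 := by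
  have h := trace_sq_eq_sum_evals sigma_herm
  rw [sigma_trace_sq] at h
  have : ((∑ k, (sigma_herm.eigenvalues k) ^ 2 : ℝ) : ℂ) = ((7/18 : ℝ) : ℂ) := by
    push_cast; rw [← h]
  exact_mod_cast this

lemma sigma_dim_one {η : ℝ} (hη : η = 1/6 ∨ η = 1/3 ∨ η = 1/2) :
    (univ.filter (fun k => sigma_herm.eigenvalues k = η)).card = 1 :=
  card_filter_bash _ sigma_evals_mem sigma_evals_sum sigma_evals_sq_sum η hη

lemma eigProj_sigma_rank_one {η : ℝ} (hη : η = 1/6 ∨ η = 1/3 ∨ η = 1/2) :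
    ∃ u : Fin 2 × Fin 2 → ℂ,
      eigProj sigmaState η = vecMulVec u (star u) ∧
      sigmaState *ᵥ u = ((η : ℝ) : ℂ) • u ∧
      ∑ p, star (u p) * u p = 1 := by
  obtain ⟨k0, hk0⟩ := Finset.card_eq_one.mp (sigma_dim_one hη)
  refine ⟨⇑(sigma_herm.eigenvectorBasis k0), ?_, ?_, ?_⟩
  · rw [eigProj, dif_pos sigma_herm, hk0, Finset.sum_singleton]
  · have hk : sigma_herm.eigenvalues k0 = η := by
      have : k0 ∈ univ.filter (fun k => sigma_herm.eigenvalues k = η) := by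
        rw [hk0]; exact Finset.mem_singleton_self k0
      exact (Finset.mem_filter.mp this).2
    have := sigma_herm.mulVec_eigenvectorBasis k0
    rw [hk] at this
    rw [this]; ext j; simp [Complex.real_smul]
  · have h := orthonormal_iff_ite.mp sigma_herm.eigenvectorBasis.orthonormal k0 k0
    rw [if_pos rfl] at h
    rw [← h, PiLp.inner_apply]
    simp [RCLike.inner_apply, RCLike.conj_mul]

end Dev4
section Dev5

lemma sigma_mulVec_coords {u : Fin 2 × Fin 2 → ℂ} {c : ℂ} (h : sigmaState *ᵥ u = c • u) :
    (1/6) * u (0,0) = c * u (0,0) ∧ (1/3) * u (0,1) = c * u (0,1) ∧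
    (1/4) * u (1,0) + (1/4) * u (1,1) = c * u (1,0) ∧
    (1/4) * u (1,0) + (1/4) * u (1,1) = c * u (1,1) := by
  have h00 := congrFun h (0,0)
  have h01 := congrFun h (0,1)
  have h10 := congrFun h (1,0)
  have h11 := congrFun h (1,1)
  simp only [Matrix.mulVec, dotProduct, Fintype.sum_prod_type, Fin.sum_univ_two,
    sigma_apply, Pi.smul_apply, smul_eq_mul, Prod.mk.injEq] at h00 h01 h10 h11
  norm_num [-mul_eq_mul_right_iff, -Prod.mk_zero_zero, -Prod.mk_one_one]
    at h00 h01 h10 h11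
  exact ⟨h00, h01, h10, h11⟩
end Dev5
section Dev5b

lemma eigvec_sixth {u : Fin 2 × Fin 2 → ℂ}
    (h : sigmaState *ᵥ u = ((1/6 : ℝ) : ℂ) • u) :
    u (0,1) = 0 ∧ u (1,0) = 0 ∧ u (1,1) = 0 := by
  obtain ⟨e0, e1, e2, e3⟩ := sigma_mulVec_coords h
  push_cast at e0 e1 e2 e3
  refine ⟨by linear_combination 6 * e1, ?_, ?_⟩
  · linear_combination (-(3:ℂ)/2) * e2 + (9/2 : ℂ) * e3
  · linear_combination (9/2 : ℂ) * e2 + (-(3:ℂ)/2) * e3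

lemma eigvec_third {u : Fin 2 × Fin 2 → ℂ}
    (h : sigmaState *ᵥ u = ((1/3 : ℝ) : ℂ) • u) :
    u (0,0) = 0 ∧ u (1,0) = 0 ∧ u (1,1) = 0 := by
  obtain ⟨e0, e1, e2, e3⟩ := sigma_mulVec_coords h
  push_cast at e0 e1 e2 e3
  refine ⟨by linear_combination (-6:ℂ) * e0, ?_, ?_⟩
  · linear_combination ((3:ℂ)/2) * e2 + (9/2 : ℂ) * e3
  · linear_combination (9/2 : ℂ) * e2 + ((3:ℂ)/2) * e3

lemma eigvec_half {u : Fin 2 × Fin 2 → ℂ}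
    (h : sigmaState *ᵥ u = ((1/2 : ℝ) : ℂ) • u) :
    u (0,0) = 0 ∧ u (0,1) = 0 ∧ u (1,0) = u (1,1) := by
  obtain ⟨e0, e1, e2, e3⟩ := sigma_mulVec_coords h
  push_cast at e0 e1 e2 e3
  exact ⟨by linear_combination (-3:ℂ) * e0, by linear_combination (-6:ℂ) * e1,
    by linear_combination (-2:ℂ) * e2 + 2 * e3⟩

end Dev5b
section Dev6

lemma evals2_cases {A : Matrix (Fin 2) (Fin 2) ℂ} {η : ℝ}
    (htr : A 0 0 + A 1 1 = ((η : ℝ) : ℂ))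
    (hdet0 : A 0 0 * A 1 1 - A 0 1 * A 1 0 = 0) :
    ∀ i, evalsR A i = η ∨ evalsR A i = 0 := by
  have hdet : ∀ z : ℂ, (A - z • 1).det = (z - ((η : ℝ) : ℂ)) * z := by
    intro z
    rw [Matrix.det_fin_two]
    simp only [Matrix.sub_apply, Matrix.smul_apply, Matrix.one_apply, if_pos rfl]
    norm_num
    linear_combination hdet0 - z * htr
  intro i
  rcases evalsR_root A i with h | h
  · right; exact h
  · rw [hdet] at h
    rcases mul_eq_zero.mp h with h | h
    · left
      have : ((evalsR A i : ℝ) : ℂ) = ((η : ℝ) : ℂ) := by linear_combination h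
      exact_mod_cast this
    · right; exact_mod_cast h

lemma trunc_evals {η : ℝ} (hη : η = 1/6 ∨ η = 1/3 ∨ η = 1/2) :
    (∀ i, evalsR (ptraceB (trunc sigmaState η)) i = η
        ∨ evalsR (ptraceB (trunc sigmaState η)) i = 0) ∧
    (∀ i, evalsR (ptraceA (trunc sigmaState η)) i = η
        ∨ evalsR (ptraceA (trunc sigmaState η)) i = 0) := by
  obtain ⟨u, hP, hE, hN⟩ := eigProj_sigma_rank_one hη
  have hBent : ∀ a a' : Fin 2, ptraceB (trunc sigmaState η) a a'
      = ((η : ℝ) : ℂ) * (u (a,0) * star (u (a',0)) + u (a,1) * star (u (a',1))) := by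
    intro a a'
    simp only [ptraceB, trunc, hP, Matrix.smul_apply, Matrix.vecMulVec_apply, Fin.sum_univ_two,
      smul_eq_mul, Pi.star_apply]
    ring
  have hAent : ∀ b b' : Fin 2, ptraceA (trunc sigmaState η) b b'
      = ((η : ℝ) : ℂ) * (u (0,b) * star (u (0,b')) + u (1,b) * star (u (1,b'))) := by
    intro b b'
    simp only [ptraceA, trunc, hP, Matrix.smul_apply, Matrix.vecMulVec_apply, Fin.sum_univ_two,
      smul_eq_mul, Pi.star_apply]
    ring
  rw [Fintype.sum_prod_type, Fin.sum_univ_two, Fin.sum_univ_two, Fin.sum_univ_two] at hN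
  rcases hη with rfl | rfl | rfl
  · obtain ⟨z1, z2, z3⟩ := eigvec_sixth hE
    rw [z1, z2, z3] at hN
    simp only [star_zero, mul_zero, zero_mul, add_zero] at hN
    constructor
    · refine evals2_cases ?_ ?_
      · rw [hBent 0 0, hBent 1 1, z1, z2, z3]; push_cast; linear_combination (1/6 : ℂ) * hN
      · rw [hBent 0 0, hBent 1 1, hBent 0 1, hBent 1 0, z1, z2, z3]; ring
    · refine evals2_cases ?_ ?_
      · rw [hAent 0 0, hAent 1 1, z1, z2, z3]; push_cast; linear_combination (1/6 : ℂ) * hN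
      · rw [hAent 0 0, hAent 1 1, hAent 0 1, hAent 1 0, z1, z2, z3]; ring
  · obtain ⟨z1, z2, z3⟩ := eigvec_third hE
    rw [z1, z2, z3] at hN
    simp only [star_zero, mul_zero, zero_mul, add_zero, zero_add] at hN
    constructor
    · refine evals2_cases ?_ ?_
      · rw [hBent 0 0, hBent 1 1, z1, z2, z3]; push_cast; linear_combination (1/3 : ℂ) * hN
      · rw [hBent 0 0, hBent 1 1, hBent 0 1, hBent 1 0, z1, z2, z3]; ring
    · refine evals2_cases ?_ ?_
      · rw [hAent 0 0, hAent 1 1, z1, z2, z3]; push_cast; linear_combination (1/3 : ℂ) * hN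
      · rw [hAent 0 0, hAent 1 1, hAent 0 1, hAent 1 0, z1, z2, z3]; ring
  · obtain ⟨z1, z2, heq⟩ := eigvec_half hE
    rw [z1, z2, ← heq] at hN
    simp only [star_zero, mul_zero, zero_mul, add_zero, zero_add] at hN
    constructor
    · refine evals2_cases ?_ ?_
      · rw [hBent 0 0, hBent 1 1, z1, z2, ← heq]; push_cast; linear_combination (1/2 : ℂ) * hN
      · rw [hBent 0 0, hBent 1 1, hBent 0 1, hBent 1 0, z1, z2, ← heq]; ring
    · refine evals2_cases ?_ ?_
      · rw [hAent 0 0, hAent 1 1, z1, z2, ← heq]; push_cast; linear_combination (1/2 : ℂ) * hN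
      · rw [hAent 0 0, hAent 1 1, hAent 0 1, hAent 1 0, z1, z2, ← heq]; ring

end Dev6
section Dev7

lemma evalsR_sigma : evalsR sigmaState = sigma_herm.eigenvalues := by
  rw [evalsR, dif_pos sigma_herm]

lemma evals_zero_matrix : ∀ i, evalsR (0 : Matrix (Fin 2) (Fin 2) ℂ) i = 0 := by
  intro i
  rcases evals2_cases (A := 0) (η := 0) (by norm_num) (by norm_num) i with h | h <;> exact h

lemma trunc_sigma_zero : trunc sigmaState 0 = 0 := by
  rw [trunc]; norm_num

lemma ptraceB_zero : ptraceB (0 : Matrix ((Fin 2) × (Fin 2)) ((Fin 2) × (Fin 2)) ℂ) = 0 := by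
  funext a a'; simp [ptraceB]

lemma ptraceA_zero : ptraceA (0 : Matrix ((Fin 2) × (Fin 2)) ((Fin 2) × (Fin 2)) ℂ) = 0 := by
  funext a a'; simp [ptraceA]

lemma MmeasA_sigma : MmeasA sigmaState = 0 := by
  rw [MmeasA]
  apply Finset.sum_eq_zero
  intro η hη
  apply Finset.sum_eq_zero
  intro i _
  obtain ⟨k, -, hk⟩ := Finset.mem_image.mp hη
  rw [evalsR_sigma] at hk
  have hmem := sigma_evals_mem k
  rw [hk] at hmem
  rcases hmem with rfl | hmem
  · rw [trunc_sigma_zero, ptraceB_zero]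
    exact Mterm_of_eq _ _ _ (Or.inr (evals_zero_matrix i))
  · exact Mterm_of_eq _ _ _ ((trunc_evals hmem).1 i)

lemma MmeasB_sigma : MmeasB sigmaState = 0 := by
  rw [MmeasB]
  apply Finset.sum_eq_zero
  intro η hη
  apply Finset.sum_eq_zero
  intro i _
  obtain ⟨k, -, hk⟩ := Finset.mem_image.mp hη
  rw [evalsR_sigma] at hk
  have hmem := sigma_evals_mem k
  rw [hk] at hmem
  rcases hmem with rfl | hmem
  · rw [trunc_sigma_zero, ptraceA_zero]
    exact Mterm_of_eq _ _ _ (Or.inr (evals_zero_matrix i))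
  · exact Mterm_of_eq _ _ _ ((trunc_evals hmem).2 i)

lemma Mmeas_sigma : Mmeas sigmaState = 0 := by
  rw [Mmeas, MmeasA_sigma, MmeasB_sigma]; norm_num

end Dev7
section Dev8
variable {α β : Type*} [Fintype α] [Fintype β]

lemma kron_vmv_mulVec (x w1 : α → ℂ) (y w2 : β → ℂ) :
    (vecMulVec x (star x) ⊗ₖ vecMulVec y (star y)) *ᵥ (fun p => w1 p.1 * w2 p.2)
    = fun p => (x p.1 * y p.2) * ((∑ i, star (x i) * w1 i) * (∑ i, star (y i) * w2 i)) := by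
  funext p
  simp only [Matrix.mulVec, dotProduct, Fintype.sum_prod_type, Matrix.kroneckerMap_apply,
    Matrix.vecMulVec_apply, Pi.star_apply]
  rw [Finset.sum_mul_sum, Finset.mul_sum]
  refine Finset.sum_congr rfl fun q1 _ => ?_
  rw [Finset.mul_sum]
  refine Finset.sum_congr rfl fun q2 _ => ?_
  ring

lemma trace_vmv (x : α → ℂ) :
    (vecMulVec x (star x)).trace = ∑ i, star (x i) * x i := by
  simp only [Matrix.trace, Matrix.diag_apply, Matrix.vecMulVec_apply, Pi.star_apply]
  exact Finset.sum_congr rfl fun i _ => mul_comm _ _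

lemma trace_vmv_mul (x x' : α → ℂ) :
    (vecMulVec x (star x) * vecMulVec x' (star x')).trace
    = (∑ i, star (x i) * x' i) * (∑ i, star (x' i) * x i) := by
  simp only [Matrix.trace, Matrix.diag_apply, Matrix.mul_apply, Matrix.vecMulVec_apply,
    Pi.star_apply]
  rw [Finset.sum_mul_sum, Finset.sum_comm]
  refine Finset.sum_congr rfl fun i _ => Finset.sum_congr rfl fun l _ => ?_
  ring

end Dev8
section Dev9
variable {α β : Type*} [Fintype α] [Fintype β]

lemma trace_term (x x' : α → ℂ) (y y' : β → ℂ) (c c' : ℂ) :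
    ((c • (vecMulVec x (star x) ⊗ₖ vecMulVec y (star y))) *
     (c' • (vecMulVec x' (star x') ⊗ₖ vecMulVec y' (star y')))).trace
    = c * c' * ((∑ i, star (x i) * x' i) * (∑ i, star (x' i) * x i))
        * ((∑ i, star (y i) * y' i) * (∑ i, star (y' i) * y i)) := by
  rw [Matrix.smul_mul, Matrix.mul_smul, smul_smul, Matrix.trace_smul,
    ← Matrix.mul_kronecker_mul, Matrix.trace_kronecker, trace_vmv_mul, trace_vmv_mul]
  simp only [smul_eq_mul]
  ring

lemma mySum_mulVec {n γ : Type*} [Fintype n] (s : Finset γ)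
    (A : γ → Matrix n n ℂ) (v : n → ℂ) :
    (∑ i ∈ s, A i) *ᵥ v = ∑ i ∈ s, A i *ᵥ v := by
  funext p
  simp only [Matrix.mulVec, dotProduct, Matrix.sum_apply, Finset.sum_apply,
    Finset.sum_mul]
  exact Finset.sum_comm

lemma no_peb : ¬ HasProductEigenbasis sigmaState := by
  rintro ⟨a, b, e, ha, hb, hσ⟩
  have hanz : ∀ j, a j 0 ≠ 0 ∨ a j 1 ≠ 0 := by
    intro j
    by_contra hcon
    push_neg at hcon
    have h := ha j j
    rw [Fin.sum_univ_two, hcon.1, hcon.2] at h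
    simp at h
  have hbnz : ∀ k, b k 0 ≠ 0 ∨ b k 1 ≠ 0 := by
    intro k
    by_contra hcon
    push_neg at hcon
    have h := hb k k
    rw [Fin.sum_univ_two, hcon.1, hcon.2] at h
    simp at h
  -- each product vector is an eigenvector
  have key : ∀ j0 k0, sigmaState *ᵥ (fun p => a j0 p.1 * b k0 p.2)
      = ((e j0 k0 : ℝ) : ℂ) • (fun p => a j0 p.1 * b k0 p.2) := by
    intro j0 k0
    rw [hσ]
    simp only [mySum_mulVec, Matrix.smul_mulVec, kron_vmv_mulVec, ha, hb]
    funext p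
    simp only [Finset.sum_apply, Pi.smul_apply, smul_eq_mul, mul_ite, ite_mul, mul_one,
      mul_zero, zero_mul, Fin.sum_univ_two]
    fin_cases j0 <;> fin_cases k0 <;> simp
  -- nonzero
  have wnz : ∀ j0 k0, (fun p : Fin 2 × Fin 2 => a j0 p.1 * b k0 p.2) ≠ 0 := by
    intro j0 k0 hw
    obtain ⟨i1, hi1⟩ : ∃ i, a j0 i ≠ 0 := by rcases hanz j0 with h | h; exacts [⟨0, h⟩, ⟨1, h⟩]
    obtain ⟨i2, hi2⟩ : ∃ i, b k0 i ≠ 0 := by rcases hbnz k0 with h | h; exacts [⟨0, h⟩, ⟨1, h⟩]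
    have := congrFun hw (i1, i2)
    simp at this
    tauto
  -- membership
  have emem : ∀ j k, e j k = 0 ∨ e j k = 1/6 ∨ e j k = 1/3 ∨ e j k = 1/2 := by
    intro j k
    apply eigen_mem
    exact det_root_of_eigenvector (wnz j k) (key j k)
  -- trace identities
  have htr : ∑ j, ∑ k, e j k = 1 := by
    have h1 : sigmaState.trace = ∑ j, ∑ k, ((e j k : ℝ) : ℂ) := by
      rw [hσ, Matrix.trace_sum]
      refine Finset.sum_congr rfl fun j _ => ?_
      rw [Matrix.trace_sum]
      refine Finset.sum_congr rfl fun k _ => ?_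
      rw [Matrix.trace_smul, Matrix.trace_kronecker, trace_vmv, trace_vmv, ha, hb]
      simp
    rw [sigma_trace] at h1
    have : ((∑ j, ∑ k, e j k : ℝ) : ℂ) = 1 := by push_cast; rw [← h1]
    exact_mod_cast this
  have htr2 : ∑ j, ∑ k, (e j k) ^ 2 = 7/18 := by
    have h2 : (sigmaState * sigmaState).trace = ∑ j, ∑ k, ((e j k : ℝ) : ℂ) ^ 2 := by
      conv_lhs => rw [hσ]
      rw [Finset.sum_mul_sum]
      simp only [Finset.sum_mul_sum, Matrix.trace_sum, trace_term, ha, hb]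
      simp only [Fin.sum_univ_two]
      norm_num
      ring
    rw [sigma_trace_sq] at h2
    have : ((∑ j, ∑ k, (e j k) ^ 2 : ℝ) : ℂ) = ((7/18 : ℝ) : ℂ) := by
      push_cast; rw [← h2]
    exact_mod_cast this
  -- existence of each eigenvalue
  have hex : ∀ η : ℝ, (η = 1/6 ∨ η = 1/3 ∨ η = 1/2) → ∃ j k, e j k = η := by
    intro η hη
    have hcard := card_filter_bash (fun p => e p.1 p.2)
      (fun p => emem p.1 p.2)
      (by rw [Fintype.sum_prod_type]; exact htr)
      (by rw [Fintype.sum_prod_type]; exact htr2) η hη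
    obtain ⟨p, hp⟩ := Finset.card_eq_one.mp hcard
    have : p ∈ univ.filter (fun p : Fin 2 × Fin 2 => e p.1 p.2 = η) := by
      rw [hp]; exact Finset.mem_singleton_self p
    exact ⟨p.1, p.2, (Finset.mem_filter.mp this).2⟩
  -- structure of the three eigenvectors
  obtain ⟨j1, k1, he1⟩ := hex (1/6) (Or.inl rfl)
  obtain ⟨j2, k2, he2⟩ := hex (1/3) (Or.inr (Or.inl rfl))
  obtain ⟨j3, k3, he3⟩ := hex (1/2) (Or.inr (Or.inr rfl))
  have key1 := key j1 k1; rw [he1] at key1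
  have key2 := key j2 k2; rw [he2] at key2
  have key3 := key j3 k3; rw [he3] at key3
  obtain ⟨w1, w2, w3⟩ := eigvec_sixth key1
  obtain ⟨v1, v2, v3⟩ := eigvec_third key2
  obtain ⟨x1, x2, x3⟩ := eigvec_half key3
  simp only at w1 w2 w3 v1 v2 v3 x1 x2 x3
  -- k1 : b k1 1 = 0, b k1 0 ≠ 0
  have hk1 : b k1 1 = 0 := by
    rcases mul_eq_zero.mp w1 with h | h
    · rcases mul_eq_zero.mp w3 with h' | h'
      · rcases hanz j1 with hz | hz <;> tauto
      · exact h'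
    · exact h
  have hk1' : b k1 0 ≠ 0 := by rcases hbnz k1 with h | h <;> tauto
  -- k2 : b k2 0 = 0
  have hk2 : b k2 0 = 0 := by
    rcases mul_eq_zero.mp v1 with h | h
    · rcases mul_eq_zero.mp v2 with h' | h'
      · rcases hanz j2 with hz | hz <;> tauto
      · exact h'
    · exact h
  -- k3 : b k3 0 ≠ 0 and b k3 1 ≠ 0
  have hk3 : b k3 0 ≠ 0 := by
    intro h0
    have hb1 : b k3 1 ≠ 0 := by rcases hbnz k3 with h | h <;> tauto
    have ha0 : a j3 0 = 0 := by rcases mul_eq_zero.mp x2 with h | h <;> tauto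
    have ha1 : a j3 1 = 0 := by
      have : a j3 1 * b k3 1 = 0 := by rw [← x3, h0, mul_zero]
      rcases mul_eq_zero.mp this with h | h <;> tauto
    rcases hanz j3 with hz | hz <;> tauto
  have hk3' : b k3 1 ≠ 0 := by
    have ha0 : a j3 0 = 0 := by rcases mul_eq_zero.mp x1 with h | h <;> tauto
    have ha1 : a j3 1 ≠ 0 := by rcases hanz j3 with hz | hz <;> tauto
    intro h1
    have : a j3 1 * b k3 0 = 0 := by rw [x3, h1, mul_zero]
    rcases mul_eq_zero.mp this with h | h <;> tauto
  -- three pairwise distinct elements of Fin 2 : contradiction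
  have d12 : k1 ≠ k2 := fun h => hk1' (h ▸ hk2)
  have d13 : k1 ≠ k3 := fun h => hk3' (h ▸ hk1)
  have d23 : k2 ≠ k3 := fun h => hk3 (h ▸ hk2)
  have e12 : (k1 : ℕ) ≠ (k2 : ℕ) := fun h => d12 (Fin.ext h)
  have e13 : (k1 : ℕ) ≠ (k3 : ℕ) := fun h => d13 (Fin.ext h)
  have e23 : (k2 : ℕ) ≠ (k3 : ℕ) := fun h => d23 (Fin.ext h)
  have l1 := k1.isLt
  have l2 := k2.isLt
  have l3 := k3.isLt
  omega

end Dev9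

/-- `M` vanishes for the two-qubit state σ even though σ has no product
eigenbasis, so `M` does not have a perfect detection range. -/
theorem Mmeas_sigma_eq_zero_but_no_productEigenbasis :
    Mmeas sigmaState = 0 ∧ ¬ HasProductEigenbasis sigmaState := by
  exact ⟨Mmeas_sigma, no_peb⟩

end
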